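/- Let Ω be a finite type, let μ and ν be probability mass functions on Ω with supp μ ⊆ supp ν, and let ε be a real number with 0 ≤ ε ≤ 1. Then D((1−ε)·μ + ε·ν ‖ ν) ≤ (1−ε)·D(μ ‖ ν) − (1 − ∑_{x ∈ supp μ} ν(x)) · ε · log₂(1/ε), where for ε = 0 the term ε·log₂(1/ε) is interpreted as 0. -/

import Mathlib

open Finset

/-- Kullback–Leibler divergence in base 2 between two finitely supported
distributions, summing `p x * log₂ (p x / q x)` over the support of `p`. -/
noncomputable def klDiv2 {Ω : Type*} [Fintype Ω] (p q : Ω → ℝ) : ℝ :=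
  ∑ x, if 0 < p x then p x * Real.logb 2 (p x / q x) else 0

theorem stmt_6 {Ω : Type*} [Fintype Ω] (μ ν : Ω → ℝ)
    (hμ0 : ∀ x, 0 ≤ μ x) (hν0 : ∀ x, 0 ≤ ν x)
    (hμ1 : ∑ x, μ x = 1) (hν1 : ∑ x, ν x = 1)
    (hsupp : ∀ x, 0 < μ x → 0 < ν x)
    (ε : ℝ) (hε0 : 0 ≤ ε) (hε1 : ε ≤ 1) :
    klDiv2 (fun x => (1 - ε) * μ x + ε * ν x) ν ≤
      (1 - ε) * klDiv2 μ ν -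
        (1 - ∑ x with 0 < μ x, ν x) * (ε * Real.logb 2 (1 / ε)) := by
  rcases eq_or_lt_of_le hε0 with h0 | h0
  · rw [← h0]
    simp [klDiv2]
  · have hlog2 : (0:ℝ) < Real.log 2 := Real.log_pos one_lt_two
    have key : ∀ x : Ω,
        (if 0 < (1-ε)*μ x + ε*ν x then
          ((1-ε)*μ x + ε*ν x) * Real.logb 2 (((1-ε)*μ x + ε*ν x)/ν x) else 0)
        ≤ (1-ε) * (if 0 < μ x then μ x * Real.logb 2 (μ x / ν x) else 0)
          - (if 0 < μ x then 0 else ν x) * (ε * Real.logb 2 (1/ε)) := by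
      intro x
      by_cases hμx : 0 < μ x
      · have hνx : 0 < ν x := hsupp x hμx
        have hp : 0 < (1-ε)*μ x + ε*ν x := by nlinarith
        rw [if_pos hμx, if_pos hμx, if_pos hp]
        set a := μ x / ν x with ha_def
        have ha : 0 < a := div_pos hμx hνx
        have hc := Real.convexOn_mul_log.2 (Set.mem_Ici.2 ha.le)
          (Set.mem_Ici.2 (zero_le_one (α := ℝ))) (by linarith : (0:ℝ) ≤ 1 - ε)
          hε0 (by ring)
        simp only [smul_eq_mul, mul_one, Real.log_one, mul_zero, add_zero] at hc
        -- hc : ((1-ε)*a + ε) * Real.log ((1-ε)*a + ε) ≤ (1-ε)*(a * Real.log a)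
        have hpν : ((1-ε)*μ x + ε*ν x) / ν x = (1-ε)*a + ε := by
          field_simp [ha_def]
          have h1 : ν x * (μ x / ν x) = μ x := by field_simp
          rw [ha_def]; linear_combination (ε - 1) * h1
        rw [hpν, zero_mul, sub_zero, Real.logb, Real.logb]
        have hν' : ((1-ε)*μ x + ε*ν x) = ν x * ((1-ε)*a + ε) := by
          rw [ha_def]; field_simp
        have hμa : μ x = ν x * a := by rw [ha_def]; field_simp
        have main : ((1-ε)*μ x + ε*ν x) * Real.log ((1-ε)*a+ε)
            ≤ (1-ε) * (μ x * Real.log a) := by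
          rw [hν', hμa]
          calc ν x * ((1-ε)*a + ε) * Real.log ((1-ε)*a + ε)
              = ν x * (((1-ε)*a + ε) * Real.log ((1-ε)*a + ε)) := by ring
            _ ≤ ν x * ((1-ε)*(a * Real.log a)) :=
                mul_le_mul_of_nonneg_left hc hνx.le
            _ = (1-ε) * (ν x * a * Real.log a) := by ring
        calc ((1-ε)*μ x + ε*ν x) * (Real.log ((1-ε)*a+ε) / Real.log 2)
            = (((1-ε)*μ x + ε*ν x) * Real.log ((1-ε)*a+ε)) / Real.log 2 := by
              ring
          _ ≤ ((1-ε) * (μ x * Real.log a)) / Real.log 2 := by gcongr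
          _ = (1-ε) * (μ x * (Real.log a / Real.log 2)) := by ring
      · have hμx0 : μ x = 0 := le_antisymm (not_lt.1 hμx) (hμ0 x)
        rw [if_neg hμx, if_neg hμx, mul_zero, zero_sub]
        by_cases hνx : 0 < ν x
        · have hp : 0 < (1-ε)*μ x + ε*ν x := by
            rw [hμx0]; nlinarith
          rw [if_pos hp, hμx0]
          have : (1-ε)*0 + ε*ν x = ε * ν x := by ring
          rw [this]
          have hεν : ε * ν x / ν x = ε := by field_simp
          rw [hεν, one_div, Real.logb_inv]
          ring_nf
          exact le_refl _
        · have hνx0 : ν x = 0 := le_antisymm (not_lt.1 hνx) (hν0 x)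
          have hp : ¬ 0 < (1-ε)*μ x + ε*ν x := by rw [hμx0, hνx0]; simp
          rw [if_neg hp, hνx0]
          simp
    calc klDiv2 (fun x => (1 - ε) * μ x + ε * ν x) ν
        ≤ ∑ x, ((1-ε) * (if 0 < μ x then μ x * Real.logb 2 (μ x / ν x) else 0)
            - (if 0 < μ x then 0 else ν x) * (ε * Real.logb 2 (1/ε))) := by
          unfold klDiv2
          exact Finset.sum_le_sum fun x _ => key x
      _ = (1 - ε) * klDiv2 μ ν -
          (∑ x, (if 0 < μ x then 0 else ν x)) * (ε * Real.logb 2 (1 / ε)) := by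
          rw [Finset.sum_sub_distrib, ← Finset.mul_sum, ← Finset.sum_mul]
          rfl
      _ = (1 - ε) * klDiv2 μ ν -
          (1 - ∑ x with 0 < μ x, ν x) * (ε * Real.logb 2 (1 / ε)) := by
          congr 1
          congr 1
          rw [Finset.sum_filter, ← hν1]
          rw [← Finset.sum_sub_distrib]
          congr 1
          ext x
          by_cases h : 0 < μ x <;> simp [h]
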